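/- Let F̂ : K × K → 𝔸 be a normalized 2-cocycle and let ε : K³ → ℂˣ be a normalized cochain with δ_K ε = F̂ ∧ F. Let Ĝ = K ⋉_{F̂} 𝔸 be the group with underlying set K × 𝔸, product (k₁,ρ₁)(k₂,ρ₂) = (k₁k₂, ρ₁^{k₂}·ρ₂·F̂(k₁,k₂)) and identity (1,1). Then the function ω̂ : Ĝ³ → ℂˣ defined by ω̂((k₁,ρ₁),(k₂,ρ₂),(k₃,ρ₃)) := ε(k₁,k₂,k₃)·ρ₁(F(k₂,k₃)) is a normalized 3-cocycle on Ĝ with values in ℂˣ (trivial action): for all h₁,h₂,h₃,h₄ ∈ Ĝ, ω̂(h₂,h₃,h₄)·ω̂(h₁h₂,h₃,h₄)⁻¹·ω̂(h₁,h₂h₃,h₄)·ω̂(h₁,h₂,h₃h₄)⁻¹·ω̂(h₁,h₂,h₃) = 1. -/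

import Mathlib

open scoped BigOperators

section Defs

variable {A K : Type*} [CommGroup A] [Group K] [MulDistribMulAction K A]

/-- The product of the twisted (semidirect) product `G = A ⋊_F K`:
`(a₁,k₁)·(a₂,k₂) = (a₁ · ᵏ¹a₂ · F(k₁,k₂), k₁k₂)`. -/
def sdMul (F : K → K → A) (g₁ g₂ : A × K) : A × K :=
  (g₁.1 * g₁.2 • g₂.1 * F g₁.2 g₂.2, g₁.2 * g₂.2)

/-- The right action of `G = A ⋊_F K` on `K`:  `x ◁ (a,k) = x * k`. -/
def sdAct (x : K) (g : A × K) : K := x * g.2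

/-- `κ : K × G → A`, `κ_{x,(a,k)} = ˣa · F(x,k)`. -/
def kap (F : K → K → A) (x : K) (g : A × K) : A := x • g.1 * F x g.2

/-- Underlying type of the group of cochains `C^q(G, Map(K,ℂˣ))`. -/
abbrev Cq (A K : Type*) (q : ℕ) := K → (Fin q → A × K) → ℂˣ

/-- Normalization condition for cochains in `C^q(G, Map(K,ℂˣ))`:
`f(x; g₁,…,g_q) = 1` whenever some `gᵢ = 1`. -/
def NormG {q : ℕ} (f : Cq A K q) : Prop :=
  ∀ x g, (∃ i, g i = ((1 : A), (1 : K))) → f x g = 1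

/-- The differential `δ_G : C^q(G, Map(K,ℂˣ)) → C^{q+1}(G, Map(K,ℂˣ))`. -/
def deltaG (F : K → K → A) {q : ℕ} (f : Cq A K q) : Cq A K (q + 1) := fun x g =>
  f (sdAct x (g 0)) (Fin.tail g) *
    ∏ i : Fin (q + 1), f x (Fin.contractNth i (sdMul F) g) ^ ((-1 : ℤ) ^ ((i : ℕ) + 1))

/-- Underlying type of the group of cochains `C^q(A, ℂˣ)`. -/
abbrev CqA (A : Type*) (q : ℕ) := (Fin q → A) → ℂˣ

/-- Normalization condition for cochains in `C^q(A, ℂˣ)`. -/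
def NormA {q : ℕ} (α : CqA A q) : Prop := ∀ a, (∃ i, a i = 1) → α a = 1

/-- The differential `δ_A` on `C^*(A, ℂˣ)` (trivial `A`-action on `ℂˣ`). -/
def deltaA {q : ℕ} (α : CqA A q) : CqA A (q + 1) := fun a =>
  α (Fin.tail a) *
    ∏ i : Fin (q + 1), α (Fin.contractNth i (· * ·) a) ^ ((-1 : ℤ) ^ ((i : ℕ) + 1))

/-- The restriction map `ψ : C^q(G, Map(K,ℂˣ)) → C^q(A, ℂˣ)`,
`ψ(f)(a₁,…,a_q) = f(1; (a₁,1),…,(a_q,1))`. -/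
def psiA {q : ℕ} (f : Cq A K q) : CqA A q := fun a => f 1 fun i => (a i, 1)

/-- The map `φ : C^q(A, ℂˣ) → C^q(G, Map(K,ℂˣ))`,
`φ(α)(x; g₁,…,g_q) = α(κ_{x,g₁}, κ_{x◁g₁,g₂}, …, κ_{x◁g₁⋯g_{q-1},g_q})`. -/
def phiA (F : K → K → A) {q : ℕ} (α : CqA A q) : Cq A K q := fun x g =>
  α fun i => kap F (x * ((List.ofFn fun j => (g j).2).take (i : ℕ)).prod) (g i)

/-- The right `K`-action `f ◁ k` on `C^q(G, Map(K,ℂˣ))`: `(f ◁ k)(x; g) = f(kx; g)`. -/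
def rAct {q : ℕ} (f : Cq A K q) (k : K) : Cq A K q := fun x g => f (k * x) g

/-- Underlying type of `C^p(K, C^q(G, Map(K,ℂˣ)))`. -/
abbrev Cpq (A K : Type*) (p q : ℕ) := (Fin p → K) → Cq A K q

/-- Normalization in the `K`-variables. -/
def NormK {p q : ℕ} (h : Cpq A K p q) : Prop := ∀ k, (∃ i, k i = 1) → h k = 1

/-- The differential `δ_K : C^p(K, C^q(G,Map(K,ℂˣ))) → C^{p+1}(K, C^q(G,Map(K,ℂˣ)))`. -/
def deltaK {p q : ℕ} (h : Cpq A K p q) : Cpq A K (p + 1) q := fun k =>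
  h (Fin.tail k) *
    (∏ i : Fin p, h (Fin.contractNth i.castSucc (· * ·) k) ^ ((-1 : ℤ) ^ ((i : ℕ) + 1))) *
    rAct (h (Fin.init k)) (k (Fin.last p)) ^ ((-1 : ℤ) ^ (p + 1))

end Defs

/-- The right `K`-action on characters: `ρ^k(a) = ρ(ᵏa)`. -/
def rhoPow {A K : Type*} [CommGroup A] [Group K] [MulDistribMulAction K A]
    (ρ : A →* ℂˣ) (k : K) : A →* ℂˣ :=
  MonoidHom.mk' (fun a => ρ (k • a)) fun a b => by show ρ (k • (a * b)) = ρ (k • a) * ρ (k • b); rw [smul_mul', map_mul]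

/-- The product of the twisted product `Ĝ = K ⋉_F̂ 𝔸`:
`(k₁,ρ₁)·(k₂,ρ₂) = (k₁k₂, ρ₁^{k₂}·ρ₂·F̂(k₁,k₂))`. -/
def hatMul {A K : Type*} [CommGroup A] [Group K] [MulDistribMulAction K A]
    (Fh : K → K → A →* ℂˣ) (h₁ h₂ : K × (A →* ℂˣ)) : K × (A →* ℂˣ) :=
  (h₁.1 * h₂.1, rhoPow h₁.2 h₂.1 * h₂.2 * Fh h₁.1 h₂.1)

/-- `ω̂((k₁,ρ₁),(k₂,ρ₂),(k₃,ρ₃)) = ε(k₁,k₂,k₃)·ρ₁(F(k₂,k₃))`. -/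
def omegaHat {A K : Type*} [CommGroup A] (F : K → K → A) (ε : K → K → K → ℂˣ)
    (h₁ h₂ h₃ : K × (A →* ℂˣ)) : ℂˣ :=
  ε h₁.1 h₂.1 h₃.1 * h₁.2 (F h₂.1 h₃.1)

/-- `ω̂` is a normalized 3-cocycle on `Ĝ = K ⋉_F̂ 𝔸` with values in
`ℂˣ` (trivial action). -/
theorem statement12 {A K : Type*} [CommGroup A] [Group K] [Finite A] [Finite K]
    [MulDistribMulAction K A]
    (F : K → K → A)
    (hFn : ∀ k : K, F 1 k = 1 ∧ F k 1 = 1)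
    (hF : ∀ k₁ k₂ k₃ : K, k₁ • F k₂ k₃ * F k₁ (k₂ * k₃) = F (k₁ * k₂) k₃ * F k₁ k₂)
    (Fh : K → K → A →* ℂˣ)
    (hFhn : ∀ k : K, Fh 1 k = 1 ∧ Fh k 1 = 1)
    (hFh : ∀ (k₁ k₂ k₃ : K) (a : A),
      Fh k₂ k₃ a * Fh k₁ (k₂ * k₃) a = Fh (k₁ * k₂) k₃ a * Fh k₁ k₂ (k₃ • a))
    (ε : K → K → K → ℂˣ)
    (hεn : ∀ k₁ k₂ k₃ : K, k₁ = 1 ∨ k₂ = 1 ∨ k₃ = 1 → ε k₁ k₂ k₃ = 1)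
    (hε : ∀ k₁ k₂ k₃ k₄ : K,
      ε k₂ k₃ k₄ * (ε (k₁ * k₂) k₃ k₄)⁻¹ * ε k₁ (k₂ * k₃) k₄ * (ε k₁ k₂ (k₃ * k₄))⁻¹ *
        ε k₁ k₂ k₃ = Fh k₁ k₂ (F k₃ k₄))
 :
    (∀ h₁ h₂ h₃ : K × (A →* ℂˣ),
      (h₁ = (1, 1) ∨ h₂ = (1, 1) ∨ h₃ = (1, 1)) → omegaHat F ε h₁ h₂ h₃ = 1) ∧
    (∀ h₁ h₂ h₃ h₄ : K × (A →* ℂˣ),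
      omegaHat F ε h₂ h₃ h₄ * (omegaHat F ε (hatMul Fh h₁ h₂) h₃ h₄)⁻¹ *
        omegaHat F ε h₁ (hatMul Fh h₂ h₃) h₄ *
        (omegaHat F ε h₁ h₂ (hatMul Fh h₃ h₄))⁻¹ *
        omegaHat F ε h₁ h₂ h₃ = 1) := by
  constructor
  · rintro ⟨k₁, ρ₁⟩ ⟨k₂, ρ₂⟩ ⟨k₃, ρ₃⟩ (h | h | h) <;>
      simp_all [omegaHat, Prod.ext_iff, hεn, (hFn _).1, (hFn _).2]
  · rintro ⟨k₁, ρ₁⟩ ⟨k₂, ρ₂⟩ ⟨k₃, ρ₃⟩ ⟨k₄, ρ₄⟩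
    simp only [omegaHat, hatMul, rhoPow, MonoidHom.mul_apply, MonoidHom.mk'_apply]
    have hρ : ρ₁ (k₂ • F k₃ k₄) * ρ₁ (F k₂ (k₃ * k₄)) =
        ρ₁ (F (k₂ * k₃) k₄) * ρ₁ (F k₂ k₃) := by
      rw [← map_mul, ← map_mul, hF]
    have hE := hε k₁ k₂ k₃ k₄
    set E1 := ε k₂ k₃ k₄
    set E2 := ε (k₁ * k₂) k₃ k₄
    set E3 := ε k₁ (k₂ * k₃) k₄
    set E4 := ε k₁ k₂ (k₃ * k₄)
    set E5 := ε k₁ k₂ k₃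
    set P := ρ₁ (k₂ • F k₃ k₄)
    set Q := ρ₂ (F k₃ k₄)
    set R := Fh k₁ k₂ (F k₃ k₄)
    set S := ρ₁ (F (k₂ * k₃) k₄)
    set T := ρ₁ (F k₂ (k₃ * k₄))
    set U := ρ₁ (F k₂ k₃)
    have key : E1 * Q * (E2 * (P * Q * R))⁻¹ * (E3 * S) * (E4 * T)⁻¹ * (E5 * U)
        = (E1 * E2⁻¹ * E3 * E4⁻¹ * E5) * R⁻¹ * ((S * U) * (P * T)⁻¹) := by
      simp only [mul_inv, mul_assoc, mul_comm, mul_left_comm, inv_inv]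
      rw [mul_left_comm Q, mul_left_comm Q, mul_inv_cancel_left]
    rw [key, hE, ← hρ]
    group
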